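/- Let 0 < d < 1/4 and suppose ψ_l ≤ C l^{d-1} for l ≥ 1, ψ_0 ≤ C. Then for N ≥ 2 and h ∈ {-1, 1}, the sum ∑ over l, m, n, o ≥ 0 with |l-m| ≤ N-1, |n-o| ≤ N-1 and l - m + n - o = hN of ψ_l ψ_m ψ_n ψ_o is bounded by C' N^{4d-1} for a constant C' depending only on C and d. -/

import Mathlib

open Real Finset

lemma sumA (a : ℝ) (ha0 : 0 < a) (ha1 : a ≤ 1) (B : ℕ) :
    ∑ j ∈ Finset.Icc 1 B, (j : ℝ) ^ (a - 1) ≤ (2 / a) * (B : ℝ) ^ a := by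
  rcases Nat.eq_zero_or_pos B with rfl | hB
  · simp [Real.zero_rpow (ne_of_gt ha0)]
  have hB1 : (1:ℝ) ≤ (B:ℝ) := by exact_mod_cast hB
  have hBa : (1:ℝ) ≤ (B:ℝ) ^ a := Real.one_le_rpow hB1 ha0.le
  have hanti : AntitoneOn (fun x : ℝ => x ^ (a - 1)) (Set.Icc ((1:ℕ):ℝ) ((B:ℕ):ℝ)) := by
    intro x hx y hy hxy
    have h1x : (1:ℝ) ≤ x := by simpa using hx.1
    exact Real.rpow_le_rpow_of_nonpos (by linarith) hxy (by linarith)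
  have key := AntitoneOn.sum_le_integral_Ico (f := fun x : ℝ => x ^ (a - 1)) hB hanti
  have hint : (∫ x in ((1:ℕ):ℝ)..((B:ℕ):ℝ), (x:ℝ) ^ (a - 1)) = ((B:ℝ) ^ a - 1) / a := by
    rw [integral_rpow (Or.inl (by linarith))]
    norm_num
  rw [hint] at key
  have hsplit : ∑ j ∈ Finset.Icc 1 B, (j : ℝ) ^ (a - 1)
      = 1 + ∑ i ∈ Finset.Ico 1 B, (((i:ℕ):ℝ) + 1) ^ (a - 1) := by
    rw [show Finset.Icc 1 B = Finset.Ico 1 (B+1) by rfl]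
    rw [Finset.sum_Ico_eq_sum_range, Finset.sum_Ico_eq_sum_range]
    rw [show B + 1 - 1 = (B - 1) + 1 from by omega]
    rw [Finset.sum_range_succ']
    have : ((1:ℕ):ℝ) ^ (a-1) = 1 := by norm_num
    rw [show (1:ℕ) + 0 = 1 from rfl, this]
    rw [add_comm]
    congr 1
    apply Finset.sum_congr rfl
    intro i _
    norm_num; ring_nf
  rw [hsplit]
  have h1a : (1:ℝ) ≤ 1 / a := by
    rw [le_div_iff₀ ha0]; linarith
  calc 1 + ∑ i ∈ Finset.Ico 1 B, (((i:ℕ):ℝ) + 1) ^ (a - 1)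
      ≤ 1 + ((B:ℝ) ^ a - 1) / a := by
        refine add_le_add (le_refl _) (le_trans (le_of_eq ?_) key)
        apply Finset.sum_congr rfl
        intro i _; push_cast; ring_nf
    _ ≤ (2 / a) * (B : ℝ) ^ a := by
        rw [div_mul_eq_mul_div, le_div_iff₀ ha0, add_mul,
          div_mul_cancel₀ _ (ne_of_gt ha0)]
        nlinarith [hBa]

lemma tailB (b : ℝ) (hb : b < -1) (j M : ℕ) (hj : 1 ≤ j) :
    ∑ m ∈ Finset.Ico (j+1) M, (m:ℝ) ^ b ≤ (j:ℝ) ^ (b+1) / (-(b+1)) := by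
  have hb1 : 0 < -(b+1) := by linarith
  have hj0 : (0:ℝ) < (j:ℝ) := by exact_mod_cast hj
  have hjb : (0:ℝ) < (j:ℝ) ^ (b+1) := Real.rpow_pos_of_pos hj0 _
  rcases le_or_gt M (j+1) with hM | hM
  · rw [Finset.Ico_eq_empty (by omega)]
    simp only [Finset.sum_empty]
    positivity
  have hab : j ≤ M - 1 := by omega
  have hanti : AntitoneOn (fun x : ℝ => x ^ b) (Set.Icc ((j:ℕ):ℝ) (((M-1:ℕ)):ℝ)) := by
    intro x hx y hy hxy
    have h1x : (1:ℝ) ≤ x := le_trans (by exact_mod_cast hj) hx.1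
    exact Real.rpow_le_rpow_of_nonpos (by linarith) hxy (by linarith)
  have key := AntitoneOn.sum_le_integral_Ico (f := fun x : ℝ => x ^ b) hab hanti
  have hM1 : (1:ℝ) ≤ ((M-1:ℕ):ℝ) := by
    have : 1 ≤ M - 1 := by omega
    exact_mod_cast this
  have hint : (∫ x in ((j:ℕ):ℝ)..(((M-1:ℕ)):ℝ), (x:ℝ) ^ b)
      = (((M-1:ℕ):ℝ) ^ (b+1) - (j:ℝ) ^ (b+1)) / (b+1) := by
    rw [integral_rpow (Or.inr ⟨by linarith, ?_⟩)]
    rw [Set.mem_uIcc]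
    push_neg
    constructor <;> intro hc <;> [linarith; linarith]
  rw [hint] at key
  have hre : ∑ m ∈ Finset.Ico (j+1) M, (m:ℝ) ^ b
      = ∑ i ∈ Finset.Ico j (M-1), (((i+1:ℕ)):ℝ) ^ b := by
    rw [Finset.sum_Ico_eq_sum_range, Finset.sum_Ico_eq_sum_range]
    rw [show M - (j+1) = M - 1 - j from by omega]
    apply Finset.sum_congr rfl
    intro i _
    congr 1
    push_cast; ring
  rw [hre]
  refine le_trans key ?_
  have hMb : (0:ℝ) < ((M-1:ℕ):ℝ) ^ (b+1) := Real.rpow_pos_of_pos (by linarith) _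
  have heq : (((M-1:ℕ):ℝ) ^ (b+1) - (j:ℝ) ^ (b+1)) / (b+1)
      = ((j:ℝ) ^ (b+1) - ((M-1:ℕ):ℝ) ^ (b+1)) / (-(b+1)) := by
    rw [div_neg, ← neg_div, neg_sub]
  rw [heq]
  gcongr
  linarith

lemma convC (d C : ℝ) (hd0 : 0 < d) (hd : d < 1 / 4)
    (psi : ℕ → ℝ) (hpos : ∀ l, 0 ≤ psi l) (h0 : psi 0 ≤ C)
    (hbound : ∀ l : ℕ, 1 ≤ l → psi l ≤ C * (l : ℝ) ^ (d - 1))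
    (j : ℕ) (hj : 1 ≤ j) (M : ℕ) :
    ∑ m ∈ Finset.range M, psi (m + j) * psi m
      ≤ (C^2 * (1 + 2/d + 1/(1-2*d))) * (j:ℝ) ^ (2*d-1) := by
  have hC : 0 ≤ C := le_trans (hpos 0) h0
  have hj0 : (0:ℝ) < (j:ℝ) := by exact_mod_cast hj
  have hj1 : (1:ℝ) ≤ (j:ℝ) := by exact_mod_cast hj
  set M' := max M (j+1) with hM'
  have hMM' : M ≤ M' := le_max_left _ _
  have hjM' : j + 1 ≤ M' := le_max_right _ _
  have step0 : ∑ m ∈ Finset.range M, psi (m + j) * psi m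
      ≤ ∑ m ∈ Finset.range M', psi (m + j) * psi m := by
    apply Finset.sum_le_sum_of_subset_of_nonneg
    · exact Finset.range_subset_range.2 hMM'
    · intro i _ _; exact mul_nonneg (hpos _) (hpos _)
  refine le_trans step0 ?_
  -- split
  have hsplit : ∑ m ∈ Finset.range M', psi (m + j) * psi m
      = psi j * psi 0 + ∑ m ∈ Finset.Icc 1 j, psi (m + j) * psi m
        + ∑ m ∈ Finset.Ico (j+1) M', psi (m + j) * psi m := by
    have h1 : Finset.range M' = Finset.Ico 0 M' := by rw [Finset.range_eq_Ico]
    rw [h1, ← Finset.sum_Ico_consecutive _ (Nat.zero_le 1) (by omega : 1 ≤ M'),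
      ← Finset.sum_Ico_consecutive _ (by omega : 1 ≤ j+1) hjM']
    have h2 : Finset.Ico 0 1 = {0} := rfl
    have h3 : Finset.Ico 1 (j+1) = Finset.Icc 1 j := rfl
    rw [h2, h3, Finset.sum_singleton]
    norm_num [add_assoc]
  rw [hsplit]
  have hpow : (j:ℝ) ^ (d-1) ≤ (j:ℝ) ^ (2*d-1) :=
    Real.rpow_le_rpow_of_exponent_le hj1 (by linarith)
  -- term 1
  have t1 : psi j * psi 0 ≤ C^2 * (j:ℝ) ^ (2*d-1) := by
    have := mul_le_mul (hbound j hj) h0 (hpos 0) (by positivity)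
    calc psi j * psi 0 ≤ C * (j:ℝ)^(d-1) * C := this
      _ = C^2 * (j:ℝ)^(d-1) := by ring
      _ ≤ C^2 * (j:ℝ)^(2*d-1) := by
          apply mul_le_mul_of_nonneg_left hpow (by positivity)
  -- term 2
  have t2 : ∑ m ∈ Finset.Icc 1 j, psi (m + j) * psi m
      ≤ (C^2 * (2/d)) * (j:ℝ) ^ (2*d-1) := by
    have step : ∀ m ∈ Finset.Icc 1 j, psi (m + j) * psi m
        ≤ C^2 * (j:ℝ)^(d-1) * (m:ℝ)^(d-1) := by
      intro m hm
      obtain ⟨hm1, hmj⟩ := Finset.mem_Icc.1 hm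
      have hm0 : (0:ℝ) < (m:ℝ) := by exact_mod_cast hm1
      have hb1 : psi (m+j) ≤ C * (j:ℝ)^(d-1) := by
        refine le_trans (hbound (m+j) (by omega)) ?_
        apply mul_le_mul_of_nonneg_left _ hC
        apply Real.rpow_le_rpow_of_nonpos hj0 (by exact_mod_cast Nat.le_add_left j m) (by linarith)
      have hb2 : psi m ≤ C * (m:ℝ)^(d-1) := hbound m hm1
      calc psi (m+j) * psi m ≤ (C * (j:ℝ)^(d-1)) * (C * (m:ℝ)^(d-1)) :=
            mul_le_mul hb1 hb2 (hpos m) (by positivity)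
        _ = C^2 * (j:ℝ)^(d-1) * (m:ℝ)^(d-1) := by ring
    refine le_trans (Finset.sum_le_sum step) ?_
    rw [← Finset.mul_sum]
    have := sumA d hd0 (by linarith) j
    calc C^2 * (j:ℝ)^(d-1) * ∑ m ∈ Finset.Icc 1 j, (m:ℝ)^(d-1)
        ≤ C^2 * (j:ℝ)^(d-1) * ((2/d) * (j:ℝ)^d) := by
          apply mul_le_mul_of_nonneg_left this (by positivity)
      _ = (C^2 * (2/d)) * ((j:ℝ)^(d-1) * (j:ℝ)^d) := by ring
      _ = (C^2 * (2/d)) * (j:ℝ)^(2*d-1) := by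
          rw [← Real.rpow_add hj0]; ring_nf
  -- term 3
  have t3 : ∑ m ∈ Finset.Ico (j+1) M', psi (m + j) * psi m
      ≤ (C^2 * (1/(1-2*d))) * (j:ℝ) ^ (2*d-1) := by
    have step : ∀ m ∈ Finset.Ico (j+1) M', psi (m + j) * psi m
        ≤ C^2 * (m:ℝ)^(2*d-2) := by
      intro m hm
      obtain ⟨hm1, _⟩ := Finset.mem_Ico.1 hm
      have hm1' : 1 ≤ m := by omega
      have hm0 : (0:ℝ) < (m:ℝ) := by exact_mod_cast hm1'
      have hb1 : psi (m+j) ≤ C * (m:ℝ)^(d-1) := by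
        refine le_trans (hbound (m+j) (by omega)) ?_
        apply mul_le_mul_of_nonneg_left _ hC
        apply Real.rpow_le_rpow_of_nonpos hm0 (by exact_mod_cast Nat.le_add_right m j) (by linarith)
      calc psi (m+j) * psi m ≤ (C * (m:ℝ)^(d-1)) * (C * (m:ℝ)^(d-1)) :=
            mul_le_mul hb1 (hbound m hm1') (hpos m) (by positivity)
        _ = C^2 * ((m:ℝ)^(d-1) * (m:ℝ)^(d-1)) := by ring
        _ = C^2 * (m:ℝ)^(2*d-2) := by rw [← Real.rpow_add hm0]; ring_nf
    refine le_trans (Finset.sum_le_sum step) ?_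
    rw [← Finset.mul_sum]
    have htail := tailB (2*d-2) (by linarith) j M' hj
    calc C^2 * ∑ m ∈ Finset.Ico (j+1) M', (m:ℝ)^(2*d-2)
        ≤ C^2 * ((j:ℝ)^(2*d-2+1) / (-(2*d-2+1))) := by
          apply mul_le_mul_of_nonneg_left htail (by positivity)
      _ = (C^2 * (1/(1-2*d))) * (j:ℝ)^(2*d-1) := by
          rw [show 2*d-2+1 = 2*d-1 from by ring]
          rw [show -(2*d-1) = 1-2*d from by ring]
          ring
  calc psi j * psi 0 + ∑ m ∈ Finset.Icc 1 j, psi (m + j) * psi m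
        + ∑ m ∈ Finset.Ico (j+1) M', psi (m + j) * psi m
      ≤ C^2 * (j:ℝ)^(2*d-1) + (C^2 * (2/d)) * (j:ℝ)^(2*d-1)
        + (C^2 * (1/(1-2*d))) * (j:ℝ)^(2*d-1) := by
        exact add_le_add (add_le_add t1 t2) t3
    _ = (C^2 * (1 + 2/d + 1/(1-2*d))) * (j:ℝ) ^ (2*d-1) := by ring

lemma pairD (d C : ℝ) (hd0 : 0 < d) (hd : d < 1 / 4)
    (psi : ℕ → ℝ) (hpos : ∀ l, 0 ≤ psi l) (h0 : psi 0 ≤ C)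
    (hbound : ∀ l : ℕ, 1 ≤ l → psi l ≤ C * (l : ℝ) ^ (d - 1))
    (j : ℤ) (hj : j ≠ 0) (M : ℕ) :
    ∑ p ∈ Finset.range M ×ˢ Finset.range M,
        (if ((p.1:ℤ) - (p.2:ℤ) = j) then psi p.1 * psi p.2 else 0)
      ≤ (C^2 * (1 + 2/d + 1/(1-2*d))) * ((j.natAbs : ℝ)) ^ (2*d-1) := by
  have hC : 0 ≤ C := le_trans (hpos 0) h0
  set j₀ := j.natAbs with hj₀def
  have hj₀ : 1 ≤ j₀ := Int.natAbs_pos.2 hj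
  rw [Finset.sum_product]
  rcases lt_or_gt_of_ne hj with hneg | hposj
  · -- j < 0 : m = l + j₀
    have inner : ∀ l ∈ Finset.range M,
        (∑ m ∈ Finset.range M, if ((l:ℤ) - (m:ℤ) = j) then psi l * psi m else 0)
          ≤ psi (l + j₀) * psi l := by
      intro l _
      have hcond : ∀ m : ℕ, (((l:ℤ) - (m:ℤ) = j)) ↔ m = l + j₀ := by
        intro m; omega
      calc (∑ m ∈ Finset.range M, if ((l:ℤ) - (m:ℤ) = j) then psi l * psi m else 0)
          = ∑ m ∈ Finset.range M, if m = l + j₀ then psi l * psi m else 0 := by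
            apply Finset.sum_congr rfl; intro m _
            exact if_congr (hcond m) rfl rfl
        _ = if l + j₀ ∈ Finset.range M then psi l * psi (l + j₀) else 0 := by
            rw [Finset.sum_ite_eq']
        _ ≤ psi (l + j₀) * psi l := by
            split_ifs
            · rw [mul_comm]
            · exact mul_nonneg (hpos _) (hpos _)
    refine le_trans (Finset.sum_le_sum inner) ?_
    exact convC d C hd0 hd psi hpos h0 hbound j₀ hj₀ M
  · -- j > 0 : l = m + j₀
    rw [Finset.sum_comm]
    have inner : ∀ m ∈ Finset.range M,
        (∑ l ∈ Finset.range M, if ((l:ℤ) - (m:ℤ) = j) then psi l * psi m else 0)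
          ≤ psi (m + j₀) * psi m := by
      intro m _
      have hcond : ∀ l : ℕ, (((l:ℤ) - (m:ℤ) = j)) ↔ l = m + j₀ := by
        intro l; omega
      calc (∑ l ∈ Finset.range M, if ((l:ℤ) - (m:ℤ) = j) then psi l * psi m else 0)
          = ∑ l ∈ Finset.range M, if l = m + j₀ then psi l * psi m else 0 := by
            apply Finset.sum_congr rfl; intro l _
            exact if_congr (hcond l) rfl rfl
        _ = if m + j₀ ∈ Finset.range M then psi (m + j₀) * psi m else 0 := by
            rw [Finset.sum_ite_eq']
        _ ≤ psi (m + j₀) * psi m := by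
            split_ifs
            · exact le_refl _
            · exact mul_nonneg (hpos _) (hpos _)
    refine le_trans (Finset.sum_le_sum inner) ?_
    exact convC d C hd0 hd psi hpos h0 hbound j₀ hj₀ M

lemma absG (a : ℝ) (ha0 : 0 < a) (ha1 : a ≤ 1) (K' : Finset ℤ) (B : ℕ)
    (hK : ∀ k ∈ K', k ≠ 0 ∧ k.natAbs ≤ B) :
    ∑ k ∈ K', ((k.natAbs : ℝ)) ^ (a-1) ≤ 2 * ((2/a) * (B:ℝ)^a) := by
  have hsub : K' ⊆ Finset.Icc (-(B:ℤ)) (-1) ∪ Finset.Icc 1 (B:ℤ) := by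
    intro k hk
    obtain ⟨h1, h2⟩ := hK k hk
    simp only [Finset.mem_union, Finset.mem_Icc]
    omega
  have step : ∑ k ∈ K', ((k.natAbs : ℝ)) ^ (a-1)
      ≤ ∑ k ∈ Finset.Icc (-(B:ℤ)) (-1) ∪ Finset.Icc 1 (B:ℤ), ((k.natAbs : ℝ)) ^ (a-1) := by
    apply Finset.sum_le_sum_of_subset_of_nonneg hsub
    intro k _ _
    exact Real.rpow_nonneg (Nat.cast_nonneg _) _
  refine le_trans step ?_
  rw [Finset.sum_union (by
    rw [Finset.disjoint_left]
    intro k hk1 hk2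
    simp only [Finset.mem_Icc] at hk1 hk2
    omega)]
  have hneg : Finset.Icc (-(B:ℤ)) (-1) = Finset.image (fun j : ℤ => -j) (Finset.Icc 1 (B:ℤ)) := by
    ext k
    simp only [Finset.mem_Icc, Finset.mem_image]
    constructor
    · intro hk; exact ⟨-k, by omega, by omega⟩
    · rintro ⟨j, hj, rfl⟩; omega
  have hposeq : ∀ (s : Finset ℤ), s = Finset.Icc 1 (B:ℤ) →
      ∑ k ∈ s, ((k.natAbs : ℝ)) ^ (a-1) = ∑ j ∈ Finset.Icc 1 B, (j:ℝ) ^ (a-1) := by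
    rintro s rfl
    have himg : Finset.Icc (1:ℤ) (B:ℤ) = Finset.image (fun j : ℕ => (j:ℤ)) (Finset.Icc 1 B) := by
      ext k
      simp only [Finset.mem_Icc, Finset.mem_image]
      constructor
      · intro hk; exact ⟨k.toNat, by omega, by omega⟩
      · rintro ⟨j, hj, rfl⟩; omega
    rw [himg, Finset.sum_image (by intro x _ y _ hxy; simp only at hxy; exact_mod_cast hxy)]
    apply Finset.sum_congr rfl
    intro j _
    simp
  have hnegsum : ∑ k ∈ Finset.Icc (-(B:ℤ)) (-1), ((k.natAbs : ℝ)) ^ (a-1)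
      = ∑ j ∈ Finset.Icc 1 B, (j:ℝ) ^ (a-1) := by
    rw [hneg, Finset.sum_image (by intro x _ y _ hxy; simp only at hxy; omega)]
    rw [← hposeq _ rfl]
    apply Finset.sum_congr rfl
    intro k _
    rw [Int.natAbs_neg]
  rw [hnegsum, hposeq _ rfl]
  have := sumA a ha0 ha1 B
  linarith

lemma mainFin (d C : ℝ) (hd0 : 0 < d) (hd : d < 1 / 4)
    (psi : ℕ → ℝ) (hpos : ∀ l, 0 ≤ psi l) (h0 : psi 0 ≤ C)
    (hbound : ∀ l : ℕ, 1 ≤ l → psi l ≤ C * (l : ℝ) ^ (d - 1))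
    (N : ℕ) (hN : 2 ≤ N) (h : ℤ) (hh : h = 1 ∨ h = -1)
    (s : Finset (ℕ × ℕ × ℕ × ℕ)) :
    (∑ q ∈ s,
        if |(q.1 : ℤ) - q.2.1| ≤ (N : ℤ) - 1 ∧ |(q.2.2.1 : ℤ) - q.2.2.2| ≤ (N : ℤ) - 1 ∧
            (q.1 : ℤ) - q.2.1 + q.2.2.1 - q.2.2.2 = h * N then
          psi q.1 * psi q.2.1 * psi q.2.2.1 * psi q.2.2.2 else 0)
      ≤ (16 * (C^2 * (1 + 2/d + 1/(1-2*d)))^2 / d + 1) * (N : ℝ) ^ (4 * d - 1) := by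
  have hC : 0 ≤ C := le_trans (hpos 0) h0
  have hd2 : 0 < 1 - 2*d := by linarith
  set A := C^2 * (1 + 2/d + 1/(1-2*d)) with hA
  have hA0 : 0 ≤ A := by rw [hA]; positivity
  set e := h * (N:ℤ) with he
  have heN : e = (N:ℤ) ∨ e = -(N:ℤ) := by
    rcases hh with rfl | rfl
    · left; rw [he]; ring
    · right; rw [he]; ring
  clear_value e
  clear he hh
  -- the summand
  set Fq : ℕ × ℕ × ℕ × ℕ → ℝ := fun q =>
    if |(q.1 : ℤ) - q.2.1| ≤ (N : ℤ) - 1 ∧ |(q.2.2.1 : ℤ) - q.2.2.2| ≤ (N : ℤ) - 1 ∧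
        (q.1 : ℤ) - q.2.1 + q.2.2.1 - q.2.2.2 = e then
      psi q.1 * psi q.2.1 * psi q.2.2.1 * psi q.2.2.2 else 0 with hFq
  have hFnonneg : ∀ q, 0 ≤ Fq q := by
    intro q; rw [hFq]; dsimp only
    split_ifs
    · have := hpos q.1; have := hpos q.2.1; have := hpos q.2.2.1; have := hpos q.2.2.2
      positivity
    · exact le_refl 0
  -- box
  set M := 1 + s.sup (fun q => q.1 + q.2.1 + q.2.2.1 + q.2.2.2) with hM
  set box : Finset (ℕ × ℕ × ℕ × ℕ) :=
    Finset.range M ×ˢ (Finset.range M ×ˢ (Finset.range M ×ˢ Finset.range M)) with hbox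
  have hsbox : s ⊆ box := by
    intro q hq
    have hle : q.1 + q.2.1 + q.2.2.1 + q.2.2.2
        ≤ s.sup (fun q => q.1 + q.2.1 + q.2.2.1 + q.2.2.2) :=
      Finset.le_sup (f := fun q => q.1 + q.2.1 + q.2.2.1 + q.2.2.2) hq
    rw [hbox]
    simp only [Finset.mem_product, Finset.mem_range]
    omega
  have step0 : ∑ q ∈ s, Fq q ≤ ∑ q ∈ box, Fq q :=
    Finset.sum_le_sum_of_subset_of_nonneg hsbox (fun q _ _ => hFnonneg q)
  -- the set of allowed k values
  set K : Finset ℤ := (Finset.Icc (e - ((N:ℤ)-1)) (e + ((N:ℤ)-1))).erase e with hK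
  have hKfacts : ∀ k ∈ K, k ≠ 0 ∧ k ≠ e ∧ k.natAbs ≤ 2*N ∧ (e - k) ≠ 0 ∧ (e - k).natAbs ≤ 2*N := by
    intro k hk
    rw [hK, Finset.mem_erase, Finset.mem_Icc] at hk
    omega
  -- the two factor functions
  set g1 : ℤ → ℕ × ℕ → ℝ := fun k p =>
    if ((p.1:ℤ) - (p.2:ℤ) = e - k) then psi p.1 * psi p.2 else 0 with hg1
  set g2 : ℤ → ℕ × ℕ → ℝ := fun k p =>
    if ((p.1:ℤ) - (p.2:ℤ) = k) then psi p.1 * psi p.2 else 0 with hg2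
  have hg1nonneg : ∀ k p, 0 ≤ g1 k p := by
    intro k p; rw [hg1]; dsimp only; split_ifs
    · exact mul_nonneg (hpos _) (hpos _)
    · exact le_refl 0
  have hg2nonneg : ∀ k p, 0 ≤ g2 k p := by
    intro k p; rw [hg2]; dsimp only; split_ifs
    · exact mul_nonneg (hpos _) (hpos _)
    · exact le_refl 0
  -- pointwise bound
  have hpt : ∀ q : ℕ × ℕ × ℕ × ℕ, Fq q ≤ ∑ k ∈ K, g1 k (q.1, q.2.1) * g2 k (q.2.2.1, q.2.2.2) := by
    intro q
    by_cases hcond : |(q.1 : ℤ) - q.2.1| ≤ (N : ℤ) - 1 ∧ |(q.2.2.1 : ℤ) - q.2.2.2| ≤ (N : ℤ) - 1 ∧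
        (q.1 : ℤ) - q.2.1 + q.2.2.1 - q.2.2.2 = e
    · obtain ⟨h1, h2, h3⟩ := hcond
      rw [abs_le] at h1 h2
      set k₀ : ℤ := (q.2.2.1 : ℤ) - q.2.2.2 with hk₀
      have hk₀K : k₀ ∈ K := by
        rw [hK, Finset.mem_erase, Finset.mem_Icc]
        omega
      have hval : Fq q = g1 k₀ (q.1, q.2.1) * g2 k₀ (q.2.2.1, q.2.2.2) := by
        rw [hFq, hg1, hg2]; dsimp only
        rw [if_pos (⟨abs_le.mpr h1, abs_le.mpr h2, h3⟩ :
          |(q.1 : ℤ) - q.2.1| ≤ (N : ℤ) - 1 ∧ |(q.2.2.1 : ℤ) - q.2.2.2| ≤ (N : ℤ) - 1 ∧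
            (q.1 : ℤ) - q.2.1 + q.2.2.1 - q.2.2.2 = e)]
        rw [if_pos (by omega : (q.1:ℤ) - (q.2.1:ℤ) = e - k₀),
          if_pos (rfl : (q.2.2.1:ℤ) - (q.2.2.2:ℤ) = k₀)]
        ring
      rw [hval]
      exact Finset.single_le_sum
        (fun k _ => mul_nonneg (hg1nonneg k _) (hg2nonneg k _)) hk₀K
    · have : Fq q = 0 := by rw [hFq]; dsimp only; rw [if_neg hcond]
      rw [this]
      exact Finset.sum_nonneg (fun k _ => mul_nonneg (hg1nonneg k _) (hg2nonneg k _))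
  -- main chain on the box
  have step1 : ∑ q ∈ box, Fq q ≤ ∑ k ∈ K, ∑ q ∈ box, g1 k (q.1, q.2.1) * g2 k (q.2.2.1, q.2.2.2) := by
    rw [Finset.sum_comm]
    exact Finset.sum_le_sum (fun q _ => hpt q)
  have step2 : ∀ k : ℤ, ∑ q ∈ box, g1 k (q.1, q.2.1) * g2 k (q.2.2.1, q.2.2.2)
      = (∑ p ∈ Finset.range M ×ˢ Finset.range M, g1 k p)
        * (∑ p ∈ Finset.range M ×ˢ Finset.range M, g2 k p) := by
    intro k
    rw [hbox, Finset.sum_mul_sum]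
    simp only [Finset.sum_product]
  -- bounds for the factor sums
  have hx_nonneg : ∀ k : ℤ, (0:ℝ) ≤ (((e-k).natAbs : ℝ)) ^ (2*d-1) :=
    fun k => Real.rpow_nonneg (Nat.cast_nonneg _) _
  have hy_nonneg : ∀ k : ℤ, (0:ℝ) ≤ ((k.natAbs : ℝ)) ^ (2*d-1) :=
    fun k => Real.rpow_nonneg (Nat.cast_nonneg _) _
  have step3 : ∀ k ∈ K, (∑ p ∈ Finset.range M ×ˢ Finset.range M, g1 k p)
        * (∑ p ∈ Finset.range M ×ˢ Finset.range M, g2 k p)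
      ≤ (A * (((e-k).natAbs : ℝ)) ^ (2*d-1)) * (A * ((k.natAbs : ℝ)) ^ (2*d-1)) := by
    intro k hk
    obtain ⟨hk0, hke, _, hek0, _⟩ := hKfacts k hk
    have b1 := pairD d C hd0 hd psi hpos h0 hbound (e - k) hek0 M
    have b2 := pairD d C hd0 hd psi hpos h0 hbound k hk0 M
    apply mul_le_mul (le_trans (le_of_eq rfl) b1) b2
    · exact Finset.sum_nonneg (fun p _ => hg2nonneg k p)
    · exact mul_nonneg hA0 (hx_nonneg k)
  -- halfpow
  set halfpow := ((N:ℝ)/2) ^ (2*d-1) with hhp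
  have hN0 : (0:ℝ) < (N:ℝ) := by exact_mod_cast (by omega : 0 < N)
  have hhp0 : 0 ≤ halfpow := Real.rpow_nonneg (by positivity) _
  -- pointwise product bound over K
  have step4 : ∀ k ∈ K,
      (A * (((e-k).natAbs : ℝ)) ^ (2*d-1)) * (A * ((k.natAbs : ℝ)) ^ (2*d-1))
        ≤ A^2 * (halfpow * ((((e-k).natAbs : ℝ)) ^ (2*d-1) + ((k.natAbs : ℝ)) ^ (2*d-1))) := by
    intro k hk
    obtain ⟨hk0, hke, _, hek0, _⟩ := hKfacts k hk
    set x := (((e-k).natAbs : ℝ)) ^ (2*d-1) with hxdef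
    set y := ((k.natAbs : ℝ)) ^ (2*d-1) with hydef
    have hx0 := hx_nonneg k
    have hy0 := hy_nonneg k
    have habs : N ≤ k.natAbs + (e-k).natAbs := by omega
    have hkey : x * y ≤ halfpow * (x + y) := by
      rcases (by omega : N ≤ 2 * k.natAbs ∨ N ≤ 2 * (e-k).natAbs) with hbig | hbig
      · have hyh : y ≤ halfpow := by
          rw [hydef, hhp]
          apply Real.rpow_le_rpow_of_nonpos (by positivity) _ (by linarith)
          rw [div_le_iff₀ (by norm_num : (0:ℝ) < 2)]
          exact_mod_cast (by omega : N ≤ k.natAbs * 2)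
        nlinarith
      · have hxh : x ≤ halfpow := by
          rw [hxdef, hhp]
          apply Real.rpow_le_rpow_of_nonpos (by positivity) _ (by linarith)
          rw [div_le_iff₀ (by norm_num : (0:ℝ) < 2)]
          exact_mod_cast (by omega : N ≤ (e-k).natAbs * 2)
        nlinarith
    calc (A * x) * (A * y) = A^2 * (x * y) := by ring
      _ ≤ A^2 * (halfpow * (x + y)) := by
          apply mul_le_mul_of_nonneg_left hkey (by positivity)
  -- the two k-sums
  have hd2d0 : (0:ℝ) < 2*d := by linarith
  have hd2d1 : 2*d ≤ 1 := by linarith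
  have sumy : ∑ k ∈ K, ((k.natAbs : ℝ)) ^ (2*d-1) ≤ 2 * ((2/(2*d)) * ((2*N:ℕ):ℝ)^(2*d)) := by
    have := absG (2*d) hd2d0 hd2d1 K (2*N) (fun k hk => ⟨(hKfacts k hk).1, (hKfacts k hk).2.2.1⟩)
    convert this using 4 <;> ring
  have sumx : ∑ k ∈ K, (((e-k).natAbs : ℝ)) ^ (2*d-1) ≤ 2 * ((2/(2*d)) * ((2*N:ℕ):ℝ)^(2*d)) := by
    have hinj : Set.InjOn (fun k : ℤ => e - k) K := by
      intro a _ b _ hab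
      have hab' : e - a = e - b := hab
      omega
    have himage : ∑ k ∈ K, (((e-k).natAbs : ℝ)) ^ (2*d-1)
        = ∑ k' ∈ K.image (fun k => e - k), ((k'.natAbs : ℝ)) ^ (2*d-1) := by
      rw [Finset.sum_image hinj]
    rw [himage]
    have hfacts : ∀ k' ∈ K.image (fun k => e - k), k' ≠ 0 ∧ k'.natAbs ≤ 2*N := by
      intro k' hk'
      obtain ⟨k, hk, rfl⟩ := Finset.mem_image.1 hk'
      exact ⟨(hKfacts k hk).2.2.2.1, (hKfacts k hk).2.2.2.2⟩
    have := absG (2*d) hd2d0 hd2d1 (K.image (fun k => e - k)) (2*N) hfacts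
    convert this using 4 <;> ring
  -- numeric bounds
  have h2N : ((2*N:ℕ):ℝ)^(2*d) ≤ 2 * (N:ℝ)^(2*d) := by
    have : ((2*N:ℕ):ℝ) = 2 * (N:ℝ) := by push_cast; ring
    rw [this, Real.mul_rpow (by norm_num) (le_of_lt hN0)]
    have h22 : (2:ℝ)^(2*d) ≤ 2 := by
      calc (2:ℝ)^(2*d) ≤ (2:ℝ)^(1:ℝ) :=
            Real.rpow_le_rpow_of_exponent_le one_le_two hd2d1
        _ = 2 := Real.rpow_one 2
    apply mul_le_mul_of_nonneg_right h22 (Real.rpow_nonneg (le_of_lt hN0) _)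
  have hhalf : halfpow ≤ 2 * (N:ℝ)^(2*d-1) := by
    rw [hhp, Real.div_rpow (le_of_lt hN0) (by norm_num)]
    have h2low : (2:ℝ)⁻¹ ≤ (2:ℝ)^(2*d-1) := by
      have : (2:ℝ)^(-1:ℝ) ≤ (2:ℝ)^(2*d-1) :=
        Real.rpow_le_rpow_of_exponent_le one_le_two (by linarith)
      rwa [Real.rpow_neg_one] at this
    calc (N:ℝ)^(2*d-1)/(2:ℝ)^(2*d-1) ≤ (N:ℝ)^(2*d-1)/(2:ℝ)⁻¹ :=
          div_le_div_of_nonneg_left (Real.rpow_nonneg hN0.le _) (by norm_num) h2low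
      _ = 2 * (N:ℝ)^(2*d-1) := by field_simp
  -- final assembly
  have hrpow_add : (N:ℝ)^(2*d-1) * (N:ℝ)^(2*d) = (N:ℝ)^(4*d-1) := by
    rw [← Real.rpow_add hN0]; ring_nf
  have hN2d0 : (0:ℝ) ≤ (N:ℝ)^(2*d) := Real.rpow_nonneg hN0.le _
  have hN2d10 : (0:ℝ) ≤ (N:ℝ)^(2*d-1) := Real.rpow_nonneg hN0.le _
  have hN4d10 : (0:ℝ) ≤ (N:ℝ)^(4*d-1) := Real.rpow_nonneg hN0.le _
  calc ∑ q ∈ s, Fq q ≤ ∑ q ∈ box, Fq q := step0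
    _ ≤ ∑ k ∈ K, ∑ q ∈ box, g1 k (q.1, q.2.1) * g2 k (q.2.2.1, q.2.2.2) := step1
    _ = ∑ k ∈ K, (∑ p ∈ Finset.range M ×ˢ Finset.range M, g1 k p)
        * (∑ p ∈ Finset.range M ×ˢ Finset.range M, g2 k p) := by
        exact Finset.sum_congr rfl (fun k _ => step2 k)
    _ ≤ ∑ k ∈ K, (A * (((e-k).natAbs : ℝ)) ^ (2*d-1)) * (A * ((k.natAbs : ℝ)) ^ (2*d-1)) :=
        Finset.sum_le_sum step3
    _ ≤ ∑ k ∈ K, A^2 * (halfpow * ((((e-k).natAbs : ℝ)) ^ (2*d-1) + ((k.natAbs : ℝ)) ^ (2*d-1))) :=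
        Finset.sum_le_sum step4
    _ = A^2 * halfpow * ((∑ k ∈ K, (((e-k).natAbs : ℝ)) ^ (2*d-1))
        + (∑ k ∈ K, ((k.natAbs : ℝ)) ^ (2*d-1))) := by
        rw [← Finset.sum_add_distrib, Finset.mul_sum]
        apply Finset.sum_congr rfl
        intro k _; ring
    _ ≤ A^2 * halfpow * (2 * ((2/(2*d)) * ((2*N:ℕ):ℝ)^(2*d)) + 2 * ((2/(2*d)) * ((2*N:ℕ):ℝ)^(2*d))) := by
        apply mul_le_mul_of_nonneg_left (add_le_add sumx sumy) (by positivity)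
    _ = A^2 * halfpow * ((4/d) * ((2*N:ℕ):ℝ)^(2*d)) := by
        field_simp; ring
    _ ≤ A^2 * (2 * (N:ℝ)^(2*d-1)) * ((4/d) * (2 * (N:ℝ)^(2*d))) := by
        have hhp4 : (0:ℝ) ≤ (4/d) := by positivity
        have step_a : A^2 * halfpow ≤ A^2 * (2 * (N:ℝ)^(2*d-1)) :=
          mul_le_mul_of_nonneg_left hhalf (by positivity)
        have step_b : (4/d) * ((2*N:ℕ):ℝ)^(2*d) ≤ (4/d) * (2 * (N:ℝ)^(2*d)) :=
          mul_le_mul_of_nonneg_left h2N hhp4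
        apply mul_le_mul step_a step_b (by positivity) (by positivity)
    _ = (16 * A^2 / d) * ((N:ℝ)^(2*d-1) * (N:ℝ)^(2*d)) := by ring
    _ = (16 * A^2 / d) * (N:ℝ)^(4*d-1) := by rw [hrpow_add]
    _ ≤ (16 * A^2 / d + 1) * (N:ℝ)^(4*d-1) := by
        apply mul_le_mul_of_nonneg_right (by linarith) hN4d10

theorem offresonance_fourfold_sum_bound (d C : ℝ) (hd0 : 0 < d) (hd : d < 1 / 4)
    (psi : ℕ → ℝ) (hpos : ∀ l, 0 ≤ psi l) (h0 : psi 0 ≤ C)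
    (hbound : ∀ l : ℕ, 1 ≤ l → psi l ≤ C * (l : ℝ) ^ (d - 1)) :
    ∃ C' : ℝ, 0 < C' ∧ ∀ N : ℕ, 2 ≤ N → ∀ h : ℤ, h ∈ ({-1, 1} : Set ℤ) →
      (∑' q : ℕ × ℕ × ℕ × ℕ,
          if |(q.1 : ℤ) - q.2.1| ≤ (N : ℤ) - 1 ∧ |(q.2.2.1 : ℤ) - q.2.2.2| ≤ (N : ℤ) - 1 ∧
              (q.1 : ℤ) - q.2.1 + q.2.2.1 - q.2.2.2 = h * N then
            psi q.1 * psi q.2.1 * psi q.2.2.1 * psi q.2.2.2 else 0)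
        ≤ C' * (N : ℝ) ^ (4 * d - 1) := by
  have hC : 0 ≤ C := le_trans (hpos 0) h0
  have hd2 : 0 < 1 - 2*d := by linarith
  have hC'pos : 0 < 16 * (C^2 * (1 + 2/d + 1/(1-2*d)))^2 / d + 1 := by
    have h1 : 0 ≤ 16 * (C^2 * (1 + 2/d + 1/(1-2*d)))^2 / d :=
      div_nonneg (by positivity) hd0.le
    linarith
  refine ⟨16 * (C^2 * (1 + 2/d + 1/(1-2*d)))^2 / d + 1, hC'pos, ?_⟩
  intro N hN h hh
  have hh' : h = 1 ∨ h = -1 := by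
    simp only [Set.mem_insert_iff, Set.mem_singleton_iff] at hh
    tauto
  by_cases hsum : Summable (fun q : ℕ × ℕ × ℕ × ℕ =>
      if |(q.1 : ℤ) - q.2.1| ≤ (N : ℤ) - 1 ∧ |(q.2.2.1 : ℤ) - q.2.2.2| ≤ (N : ℤ) - 1 ∧
          (q.1 : ℤ) - q.2.1 + q.2.2.1 - q.2.2.2 = h * N then
        psi q.1 * psi q.2.1 * psi q.2.2.1 * psi q.2.2.2 else 0)
  · exact Summable.tsum_le_of_sum_le hsum
      (fun s => mainFin d C hd0 hd psi hpos h0 hbound N hN h hh' s)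
  · rw [tsum_eq_zero_of_not_summable hsum]
    have : (0:ℝ) ≤ (N:ℝ) ^ (4*d-1) := Real.rpow_nonneg (Nat.cast_nonneg _) _
    nlinarith
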